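/- There exist a poset P of length 3 and three elements A, B, C of Co(P) such that the sublattice of Co(P) generated by {A, B, C} is infinite. Consequently, for every n ≥ 3 the class SUB_n of lattices embeddable into Co(Q) for some poset Q of length at most n is not locally finite. -/
import Mathlib


/-! Common definitions: lattices of order-convex subsets of a poset,
length of a poset, the identities (S), (U), (B), (L2), (H_n), (H_{m,n}),
join-irreducibility, the join-dependency relation, join-seeds,
the posets P_{I,J}, tree-like posets, D-closed sets,
and complete lattice congruences. -/

open Set

/-- The lattice `Co P` of all order-convex subsets of a poset `P`. -/
def Co (P : Type*) [PartialOrder P] : Type _ := {s : Set P // s.OrdConnected}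

namespace Co

variable {P : Type*} [PartialOrder P]

instance : PartialOrder (Co P) := Subtype.partialOrder _

instance : InfSet (Co P) :=
  ⟨fun S => ⟨⋂ s ∈ S, s.1, Set.ordConnected_biInter fun s _ => s.2⟩⟩

noncomputable instance : CompleteLattice (Co P) :=
  completeLatticeOfInf (Co P) (by
    intro S
    constructor
    · intro t ht
      exact Set.biInter_subset_of_mem (t := fun s => s.1) ht
    · intro b hb
      exact Set.subset_iInter₂ fun t ht => hb ht)

/-- The order-convex subset of `P` with underlying set `X`. -/
def mk' (X : Set P) (hX : X.OrdConnected) : Co P := ⟨X, hX⟩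

/-- The singleton `{p}`, as an order-convex set. -/
def sngl (p : P) : Co P := ⟨{p}, Set.ordConnected_singleton⟩

/-- The empty order-convex set. -/
def emp : Co P := ⟨∅, Set.ordConnected_empty⟩

end Co

/-- `lengthLE P n` states that the poset `P` has length at most `n`, that is,
every finite chain of `P` has at most `n + 1` elements. -/
def lengthLE (P : Type*) [PartialOrder P] (n : ℕ) : Prop :=
  ∀ C : Finset P, IsChain (· ≤ ·) (C : Set P) → C.card ≤ n + 1

section Identities

/-- The Stirlitz identity (S). -/
def IdS (L : Type*) [Lattice L] : Prop :=
  ∀ a b b₀ b₁ c : L,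
    a ⊓ ((b ⊓ (b₀ ⊔ b₁)) ⊔ c) =
      (a ⊓ (b ⊓ (b₀ ⊔ b₁)))
      ⊔ (a ⊓ (b₀ ⊔ c) ⊓ ((b ⊓ (b₀ ⊔ b₁) ⊓ (a ⊔ b₀)) ⊔ c))
      ⊔ (a ⊓ (b₁ ⊔ c) ⊓ ((b ⊓ (b₀ ⊔ b₁) ⊓ (a ⊔ b₁)) ⊔ c))

/-- The Udav identity (U). -/
def IdU (L : Type*) [Lattice L] : Prop :=
  ∀ x x₀ x₁ x₂ : L,
    x ⊓ (x₀ ⊔ x₁) ⊓ (x₁ ⊔ x₂) ⊓ (x₀ ⊔ x₂) =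
      (x ⊓ x₀ ⊓ (x₁ ⊔ x₂)) ⊔ (x ⊓ x₁ ⊓ (x₀ ⊔ x₂)) ⊔ (x ⊓ x₂ ⊓ (x₀ ⊔ x₁))

/-- The Bond identity (B). -/
def IdB (L : Type*) [Lattice L] : Prop :=
  ∀ x a₀ a₁ b₀ b₁ : L,
    x ⊓ (a₀ ⊔ a₁) ⊓ (b₀ ⊔ b₁) =
      (x ⊓ a₀ ⊓ (b₀ ⊔ b₁)) ⊔ (x ⊓ a₁ ⊓ (b₀ ⊔ b₁))
      ⊔ (x ⊓ b₀ ⊓ (a₀ ⊔ a₁)) ⊔ (x ⊓ b₁ ⊓ (a₀ ⊔ a₁))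
      ⊔ (x ⊓ (a₀ ⊔ a₁) ⊓ (b₀ ⊔ b₁) ⊓ (a₀ ⊔ b₀) ⊓ (a₁ ⊔ b₁))
      ⊔ (x ⊓ (a₀ ⊔ a₁) ⊓ (b₀ ⊔ b₁) ⊓ (a₀ ⊔ b₁) ⊓ (a₁ ⊔ b₀))

/-- The identity (L₂). -/
def IdL2 (L : Type*) [Lattice L] : Prop :=
  ∀ a b b' c c' : L,
    a ⊓ ((b ⊓ (c ⊔ c')) ⊔ b') =
      (a ⊓ b ⊓ (c ⊔ c')) ⊔ (a ⊓ ((b ⊓ c) ⊔ b')) ⊔ (a ⊓ ((b ⊓ c') ⊔ b'))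

variable {L : Type*} [Lattice L]

/-- The lattice polynomial `U_{i,n}` (in the variables `x₀, …, xₙ, x'₁, …, x'ₙ`). -/
def Upoly (x x' : ℕ → L) (n : ℕ) (i : ℕ) : L :=
  if h : n ≤ i then x n
  else x i ⊓ (Upoly x x' n (i + 1) ⊔ x' (i + 1))
  termination_by n - i
  decreasing_by omega

/-- The lattice polynomial `V_{i,j,n}`. -/
def Vpoly (x x' : ℕ → L) (n i : ℕ) (j : ℕ) : L :=
  if h : i ≤ j then (x i ⊓ Upoly x x' n (i + 1)) ⊔ (x i ⊓ x' (i + 1))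
  else x j ⊓ (Vpoly x x' n i (j + 1) ⊔ x' (j + 1))
  termination_by i - j
  decreasing_by omega

/-- The lattice polynomial `W_{i,j,n}`. -/
def Wpoly (x x' : ℕ → L) (n i : ℕ) (j : ℕ) : L :=
  if h : i ≤ j then
    x i ⊓ (x' (i + 1) ⊔ x' (i + 2)) ⊓ ((Upoly x x' n (i + 1) ⊓ (x i ⊔ x' (i + 2))) ⊔ x' (i + 1))
  else x j ⊓ (Wpoly x x' n i (j + 1) ⊔ x' (j + 1))
  termination_by i - j
  decreasing_by omega

/-- `bigJoin f k = f 0 ⊔ f 1 ⊔ ⋯ ⊔ f k`. -/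
def bigJoin (f : ℕ → L) : ℕ → L
  | 0 => f 0
  | k + 1 => bigJoin f k ⊔ f (k + 1)

end Identities

/-- The identity (Hₙ) : `Uₙ = ⋁_{0 ≤ i ≤ n-1} V_{i,n} ∨ ⋁_{0 ≤ i ≤ n-2} W_{i,n}`
(intended for `n ≥ 1`). -/
def IdH (n : ℕ) (L : Type*) [Lattice L] : Prop :=
  ∀ x x' : ℕ → L,
    Upoly x x' n 0 =
      bigJoin (fun i =>
        if i + 2 ≤ n then Vpoly x x' n i 0 ⊔ Wpoly x x' n i 0 else Vpoly x x' n i 0) (n - 1)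

/-- The identity (H_{m,n}) (intended for `m, n ≥ 1`); the common base point is
`x 0 = y 0 = t`. -/
def IdHmn (m n : ℕ) (L : Type*) [Lattice L] : Prop :=
  ∀ x x' y y' : ℕ → L, x 0 = y 0 →
    Upoly x x' m 0 ⊓ Upoly y y' n 0 =
      bigJoin (fun i =>
          if i + 2 ≤ m then
            (Vpoly x x' m i 0 ⊓ Upoly y y' n 0) ⊔ (Wpoly x x' m i 0 ⊓ Upoly y y' n 0)
          else Vpoly x x' m i 0 ⊓ Upoly y y' n 0) (m - 1)
      ⊔ bigJoin (fun j =>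
          if j + 2 ≤ n then
            (Upoly x x' m 0 ⊓ Vpoly y y' n j 0) ⊔ (Upoly x x' m 0 ⊓ Wpoly y y' n j 0)
          else Upoly x x' m 0 ⊓ Vpoly y y' n j 0) (n - 1)
      ⊔ (Upoly x x' m 0 ⊓ Upoly y y' n 0 ⊓ (x 1 ⊔ y' 1) ⊓ (x' 1 ⊔ y 1))

/-- `p` is join-irreducible: `p = x ⊔ y` implies `p = x` or `p = y`. -/
def JIrr {L : Type*} [Lattice L] (p : L) : Prop :=
  ∀ x y : L, p = x ⊔ y → p = x ∨ p = y

/-- The join-dependency relation `p D q`. -/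
def DRel {L : Type*} [Lattice L] (p q : L) : Prop :=
  p ≠ q ∧ ∃ x : L, p ≤ q ⊔ x ∧ ∀ y < q, ¬ p ≤ y ⊔ x

/-- A subset `S` of a lattice `L` is a join-seed. -/
def JoinSeed (L : Type*) [Lattice L] (S : Set L) : Prop :=
  (∀ p ∈ S, JIrr p) ∧
  (∀ a : L, ∃ T ⊆ S, IsLUB T a) ∧
  (∀ p ∈ S, ∀ a b : L, p ≤ a ⊔ b → ¬ p ≤ a → ¬ p ≤ b →
    ∃ x ∈ S, ∃ y ∈ S, x ≤ a ∧ y ≤ b ∧ p ≤ x ⊔ y ∧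
      (∀ x' < x, ¬ p ≤ x' ⊔ y) ∧ (∀ y' < y, ¬ p ≤ x ⊔ y'))

/-- The poset `P_{I,J} = I ∪ {p} ∪ J`, where every element of `I` is below `p`,
`p` is below every element of `J`, every element of `I` is below every element
of `J`, and there are no other strict comparabilities. -/
def PIJ (I J : Type*) : Type _ := I ⊕ (Unit ⊕ J)

namespace PIJ

variable {I J : Type*}

/-- The rank (height) of an element of `P_{I,J}`. -/
def rank (a : PIJ I J) : ℕ :=
  Sum.elim (fun _ => 0) (Sum.elim (fun _ => 1) fun _ => 2) a

instance : PartialOrder (PIJ I J) where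
  le a b := a = b ∨ rank a < rank b
  le_refl a := Or.inl rfl
  le_trans a b c hab hbc := by
    rcases hab with rfl | h
    · exact hbc
    · rcases hbc with rfl | h'
      · exact Or.inr h
      · exact Or.inr (h.trans h')
  le_antisymm a b hab hba := by
    rcases hab with rfl | h
    · rfl
    · rcases hba with rfl | h'
      · rfl
      · omega

end PIJ

/-- A poset is tree-like if it has no infinite bounded chain and between any two
points there is at most one repetition-free finite path with respect to the
covering relation. -/
def TreeLike (P : Type*) [PartialOrder P] : Prop :=
  (∀ C : Set P, IsChain (· ≤ ·) C → BddAbove C → BddBelow C → C.Finite) ∧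
  (∀ a b : P, ∀ l₁ l₂ : List P,
    l₁.Nodup → l₁.head? = some a → l₁.getLast? = some b →
      l₁.Chain' (fun u v => u ⋖ v ∨ v ⋖ u) →
    l₂.Nodup → l₂.head? = some a → l₂.getLast? = some b →
      l₂.Chain' (fun u v => u ⋖ v ∨ v ⋖ u) →
    l₁ = l₂)

/-- A subset `U` of a poset `P` is `D`-closed. -/
def DClosed {P : Type*} [PartialOrder P] (U : Set P) : Prop :=
  ∀ x p y : P, x < p → p < y → (x ∈ U ∨ y ∈ U) → p ∈ U

/-- A complete congruence of a complete lattice. -/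
structure IsCompleteCongr {L : Type*} [CompleteLattice L] (θ : L → L → Prop) : Prop where
  refl : ∀ x, θ x x
  symm : ∀ {x y}, θ x y → θ y x
  trans : ∀ {x y z}, θ x y → θ y z → θ x z
  sup : ∀ {a b c d}, θ a b → θ c d → θ (a ⊔ c) (b ⊔ d)
  inf : ∀ {a b c d}, θ a b → θ c d → θ (a ⊓ c) (b ⊓ d)
  cSup : ∀ (x : L) (Y : Set L), Y.Nonempty → (∀ y ∈ Y, θ x y) → θ x (sSup Y)
  cInf : ∀ (x : L) (Y : Set L), Y.Nonempty → (∀ y ∈ Y, θ x y) → θ x (sInf Y)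

/-- The map `h_U : Co(P) → Co(P ∖ U)`, `X ↦ X ∖ U`. -/
def coRestrict {P : Type*} [PartialOrder P] (U : Set P) (X : Co P) :
    Co {p : P // p ∉ U} :=
  ⟨Subtype.val ⁻¹' X.1, by
    constructor
    rintro a ha b hb z hz
    exact X.2.out ha hb ⟨hz.1, hz.2⟩⟩

/-- The lattice `D(P)` of all `D`-closed subsets of a poset `P`. -/
def DSub (P : Type*) [PartialOrder P] : Type _ := {U : Set P // DClosed U}

namespace DSub

variable {P : Type*} [PartialOrder P]

instance : PartialOrder (DSub P) := Subtype.partialOrder _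

instance : InfSet (DSub P) :=
  ⟨fun S => ⟨⋂ U ∈ S, U.1, by
    intro x p y h1 h2 h3
    simp only [Set.mem_iInter] at h3 ⊢
    intro U hU
    exact U.2 x p y h1 h2 (h3.imp (fun h => h U hU) fun h => h U hU)⟩⟩

noncomputable instance : CompleteLattice (DSub P) :=
  completeLatticeOfInf (DSub P) (by
    intro S
    constructor
    · intro t ht
      exact Set.biInter_subset_of_mem (t := fun U => U.1) ht
    · intro b hb
      exact Set.subset_iInter₂ fun t ht => hb ht)

end DSub

namespace Stmt5aux

inductive P3 where
  | x : ℕ → P3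
  | t : ℕ → P3
  | s : ℕ → P3
deriving DecidableEq

def slt : P3 → P3 → Prop
  | .x k, .x m => k % 2 = 1 ∧ (m = k+1 ∨ m+1 = k)
  | .x k, .t i => k = 2*i ∨ k = 2*i+1 ∨ k+1 = 2*i
  | .x _, .s _ => False
  | .t _, .x _ => False
  | .t _, .t _ => False
  | .t _, .s _ => False
  | .s j, .x m => m = 2*j ∨ m = 2*j+1 ∨ m = 2*j+2
  | .s j, .t i => i = j ∨ i = j+1
  | .s _, .s _ => False

instance : PartialOrder P3 where
  le a b := a = b ∨ slt a b
  le_refl a := Or.inl rfl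
  le_trans a b c hab hbc := by
    rcases hab with rfl | hab
    · exact hbc
    rcases hbc with rfl | hbc
    · exact Or.inr hab
    · right
      cases a <;> cases b <;> cases c <;> simp only [slt] at hab hbc ⊢ <;> omega
  le_antisymm a b hab hba := by
    rcases hab with rfl | hab
    · rfl
    rcases hba with rfl | hba
    · rfl
    exfalso
    cases a <;> cases b <;> simp only [slt] at hab hba <;> omega

lemma le_def {a b : P3} : a ≤ b ↔ a = b ∨ slt a b := Iff.rfl

end Stmt5aux

namespace Stmt5aux

def ordConnected_of {S : Set P3}
    (h : ∀ a ∈ S, ∀ b ∈ S, ∀ z, slt a z → slt z b → z ∈ S) : S.OrdConnected := by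
  constructor
  intro a ha b hb z hz
  obtain ⟨h1, h2⟩ := hz
  rcases h1 with rfl | h1
  · exact ha
  rcases h2 with rfl | h2
  · exact hb
  exact h a ha b hb z h1 h2

def Aset : Set P3 := {p | ∃ k, p = .x k}
def Bset : Set P3 := {p | p = .x 0 ∨ ∃ i, p = .t i}
def Cset : Set P3 := {p | ∃ j, p = .s j}
def Eg (M : ℕ) : Set P3 := {p | (∃ k, k ≤ M ∧ p = .x k) ∨ ∃ j, p = .s j}
def Ef (M : ℕ) : Set P3 := {p | (∃ k, k ≤ M ∧ p = .x k) ∨ ∃ i, p = .t i}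

lemma hA : Aset.OrdConnected := by
  apply ordConnected_of
  rintro a ⟨k, rfl⟩ b ⟨m, rfl⟩ z h1 h2
  cases z with
  | x q => exact ⟨q, rfl⟩
  | t i => simp only [slt] at h2
  | s j => simp only [slt] at h1

lemma hC : Cset.OrdConnected := by
  apply ordConnected_of
  rintro a ha b ⟨j, rfl⟩ z h1 h2
  cases z <;> simp only [slt] at h2

lemma hB : Bset.OrdConnected := by
  apply ordConnected_of
  rintro a ha b hb z h1 h2
  rcases ha with rfl | ⟨i, rfl⟩
  · cases z with
    | x q =>
      exfalso
      simp only [slt] at h1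
      omega
    | t i => exact Or.inr ⟨i, rfl⟩
    | s j => simp only [slt] at h1
  · cases z <;> simp only [slt] at h1

lemma hEg {M : ℕ} (hM : M % 2 = 1) : (Eg M).OrdConnected := by
  apply ordConnected_of
  rintro a ha b hb z h1 h2
  cases z with
  | s j => exact Or.inr ⟨j, rfl⟩
  | t i =>
    exfalso
    rcases hb with ⟨m, hm, rfl⟩ | ⟨j, rfl⟩ <;> simp only [slt] at h2
  | x q =>
    left
    rcases hb with ⟨m, hm, rfl⟩ | ⟨j, rfl⟩
    · simp only [slt] at h2
      rcases ha with ⟨k, hk, rfl⟩ | ⟨j, rfl⟩ <;> simp only [slt] at h1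
      · omega
      · exact ⟨q, by omega, rfl⟩
    · simp only [slt] at h2
  done

lemma hEf {M : ℕ} (hM : M % 2 = 0) : (Ef M).OrdConnected := by
  apply ordConnected_of
  rintro a ha b hb z h1 h2
  cases z with
  | s j =>
    exfalso
    rcases ha with ⟨k, hk, rfl⟩ | ⟨i, rfl⟩ <;> simp only [slt] at h1
  | t i => exact Or.inr ⟨i, rfl⟩
  | x q =>
    left
    rcases ha with ⟨k, hk, rfl⟩ | ⟨i, rfl⟩
    · simp only [slt] at h1
      rcases hb with ⟨m, hm, rfl⟩ | ⟨i, rfl⟩ <;> simp only [slt] at h2 <;>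
        exact ⟨q, by omega, rfl⟩
    · simp only [slt] at h1

end Stmt5aux

namespace Stmt5aux

def Ac : Co P3 := ⟨Aset, hA⟩
def Bc : Co P3 := ⟨Bset, hB⟩
def Cc : Co P3 := ⟨Cset, hC⟩

lemma co_le_iff {X Y : Co P3} : X ≤ Y ↔ X.1 ⊆ Y.1 := Iff.rfl

lemma inf_coe (X Y : Co P3) : (X ⊓ Y).1 = X.1 ∩ Y.1 := by
  apply Set.Subset.antisymm
  · exact Set.subset_inter (co_le_iff.mp inf_le_left) (co_le_iff.mp inf_le_right)
  · exact co_le_iff.mp (le_inf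
      (show Co.mk' (X.1 ∩ Y.1) (X.2.inter Y.2) ≤ X from Set.inter_subset_left)
      (show Co.mk' (X.1 ∩ Y.1) (X.2.inter Y.2) ≤ Y from Set.inter_subset_right))

lemma mem_sup_left {X Y : Co P3} {p : P3} (h : p ∈ X.1) : p ∈ (X ⊔ Y).1 :=
  co_le_iff.mp le_sup_left h

lemma mem_sup_right {X Y : Co P3} {p : P3} (h : p ∈ Y.1) : p ∈ (X ⊔ Y).1 :=
  co_le_iff.mp le_sup_right h

lemma mem_sup_between {X Y : Co P3} {u v z : P3}
    (hu : u ∈ (X ⊔ Y).1) (hv : v ∈ (X ⊔ Y).1) (h1 : u ≤ z) (h2 : z ≤ v) :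
    z ∈ (X ⊔ Y).1 :=
  (X ⊔ Y).2.out hu hv ⟨h1, h2⟩

lemma sup_subset {X Y : Co P3} {E : Set P3} (hE : E.OrdConnected)
    (h1 : X.1 ⊆ E) (h2 : Y.1 ⊆ E) : (X ⊔ Y).1 ⊆ E :=
  co_le_iff.mp (sup_le (show X ≤ Co.mk' E hE from h1) (show Y ≤ Co.mk' E hE from h2))

noncomputable def Wt : ℕ → Co P3
  | 0 => Ac ⊓ Bc
  | n+1 => Ac ⊓ (Wt n ⊔ (if n % 2 = 0 then Cc else Bc))

lemma Wt_coe (n : ℕ) : (Wt n).1 = {p | ∃ k, k ≤ n ∧ p = P3.x k} := by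
  induction n with
  | zero =>
    show (Ac ⊓ Bc).1 = _
    rw [inf_coe]
    ext p
    constructor
    · rintro ⟨⟨k, rfl⟩, hb⟩
      rcases hb with h | ⟨i, h⟩
      · exact ⟨0, le_refl 0, h⟩
      · exact absurd h (by simp)
    · rintro ⟨k, hk, rfl⟩
      have : k = 0 := by omega
      subst this
      exact ⟨⟨0, rfl⟩, Or.inl rfl⟩
  | succ n ih =>
    rcases Nat.even_or_odd n with ⟨j, hj⟩ | ⟨j, hj⟩
    · -- n = j + j even : join with Cc
      have hmod : n % 2 = 0 := by omega
      show (Ac ⊓ (Wt n ⊔ _)).1 = _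
      rw [if_pos hmod, inf_coe]
      apply Set.Subset.antisymm
      · have hsub : (Wt n ⊔ Cc).1 ⊆ Eg (n+1) := by
          apply sup_subset (hEg (by omega))
          · rw [ih]
            rintro p ⟨k, hk, rfl⟩
            exact Or.inl ⟨k, by omega, rfl⟩
          · rintro p ⟨j', rfl⟩
            exact Or.inr ⟨j', rfl⟩
        rintro p ⟨⟨k, rfl⟩, hp2⟩
        rcases hsub hp2 with ⟨k', hk', he⟩ | ⟨j', he⟩
        · obtain rfl : k = k' := by injection he
          exact ⟨k, hk', rfl⟩
        · exact absurd he (by simp)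
      · rintro p ⟨k, hk, rfl⟩
        refine ⟨⟨k, rfl⟩, ?_⟩
        rcases Nat.lt_or_ge k (n+1) with hlt | hge
        · exact mem_sup_left (by rw [ih]; exact ⟨k, by omega, rfl⟩)
        · obtain rfl : k = n+1 := by omega
          refine mem_sup_between (u := P3.s j) (v := P3.x n)
            (mem_sup_right ⟨j, rfl⟩)
            (mem_sup_left (by rw [ih]; exact ⟨n, le_refl n, rfl⟩)) ?_ ?_
          · exact Or.inr (Or.inr (Or.inl (by omega)))
          · exact Or.inr ⟨by omega, Or.inr (by omega)⟩
    · -- n = 2j+1 odd : join with Bc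
      have hmod : ¬ (n % 2 = 0) := by omega
      show (Ac ⊓ (Wt n ⊔ _)).1 = _
      rw [if_neg hmod, inf_coe]
      apply Set.Subset.antisymm
      · have hsub : (Wt n ⊔ Bc).1 ⊆ Ef (n+1) := by
          apply sup_subset (hEf (by omega))
          · rw [ih]
            rintro p ⟨k, hk, rfl⟩
            exact Or.inl ⟨k, by omega, rfl⟩
          · rintro p (rfl | ⟨i, rfl⟩)
            · exact Or.inl ⟨0, by omega, rfl⟩
            · exact Or.inr ⟨i, rfl⟩
        rintro p ⟨⟨k, rfl⟩, hp2⟩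
        rcases hsub hp2 with ⟨k', hk', he⟩ | ⟨i, he⟩
        · obtain rfl : k = k' := by injection he
          exact ⟨k, hk', rfl⟩
        · exact absurd he (by simp)
      · rintro p ⟨k, hk, rfl⟩
        refine ⟨⟨k, rfl⟩, ?_⟩
        rcases Nat.lt_or_ge k (n+1) with hlt | hge
        · exact mem_sup_left (by rw [ih]; exact ⟨k, by omega, rfl⟩)
        · obtain rfl : k = n+1 := by omega
          refine mem_sup_between (u := P3.x n) (v := P3.t (j+1))
            (mem_sup_left (by rw [ih]; exact ⟨n, le_refl n, rfl⟩))
            (mem_sup_right (Or.inr ⟨j+1, rfl⟩)) ?_ ?_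
          · exact Or.inr ⟨by omega, Or.inl (by omega)⟩
          · exact Or.inr (Or.inl (by omega))

end Stmt5aux

namespace Stmt5aux

lemma Ac_mem : Ac ∈ latticeClosure {Ac, Bc, Cc} := subset_latticeClosure (by simp)
lemma Bc_mem : Bc ∈ latticeClosure {Ac, Bc, Cc} := subset_latticeClosure (by simp)
lemma Cc_mem : Cc ∈ latticeClosure {Ac, Bc, Cc} := subset_latticeClosure (by simp)

lemma Wt_mem (n : ℕ) : Wt n ∈ latticeClosure {Ac, Bc, Cc} := by
  induction n with
  | zero => exact isSublattice_latticeClosure.2 Ac_mem Bc_mem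
  | succ n ih =>
    show Ac ⊓ (Wt n ⊔ _) ∈ _
    split
    · exact isSublattice_latticeClosure.2 Ac_mem (isSublattice_latticeClosure.1 ih Cc_mem)
    · exact isSublattice_latticeClosure.2 Ac_mem (isSublattice_latticeClosure.1 ih Bc_mem)

lemma Wt_inj : Function.Injective Wt := by
  have key : ∀ m n, Wt m = Wt n → m ≤ n := by
    intro m n h
    have h1 : (P3.x m) ∈ (Wt m).1 := by rw [Wt_coe]; exact ⟨m, le_refl m, rfl⟩
    rw [h, Wt_coe] at h1
    obtain ⟨k, hk, he⟩ := h1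
    have : m = k := by injection he
    omega
  intro m n h
  exact le_antisymm (key m n h) (key n m h.symm)

lemma closure_infinite : (latticeClosure {Ac, Bc, Cc}).Infinite :=
  Set.infinite_of_injective_forall_mem Wt_inj Wt_mem

def lv : P3 → ℕ
  | .x k => if k % 2 = 0 then 2 else 1
  | .t _ => 3
  | .s _ => 0

lemma lv_lt_four (p : P3) : lv p < 4 := by
  cases p with
  | x k => simp only [lv]; split <;> omega
  | t i => simp [lv]
  | s j => simp [lv]

lemma lv_mono {a b : P3} (h : slt a b) : lv a < lv b := by
  cases a <;> cases b <;> simp only [slt, lv] at h ⊢ <;> (try split_ifs) <;> omega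

lemma length3 : lengthLE P3 3 := by
  intro C hC
  classical
  have hinj : Set.InjOn lv (C : Set P3) := by
    intro a ha b hb hab
    by_contra hne
    rcases hC ha hb hne with h | h <;> rcases h with h | h
    · exact hne h
    · exact absurd hab (Nat.ne_of_lt (lv_mono h))
    · exact hne h.symm
    · exact absurd hab.symm (Nat.ne_of_lt (lv_mono h))
  calc C.card = (C.image lv).card := (Finset.card_image_of_injOn hinj).symm
    _ ≤ (Finset.range 4).card := by
        apply Finset.card_le_card
        intro v hv
        obtain ⟨p, _, rfl⟩ := Finset.mem_image.mp hv
        exact Finset.mem_range.mpr (lv_lt_four p)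
    _ = 4 := Finset.card_range 4

lemma not_length2 : ¬ lengthLE P3 2 := by
  intro h
  have hchain : IsChain (· ≤ ·)
      (({P3.s 0, P3.x 1, P3.x 0, P3.t 0} : Finset P3) : Set P3) := by
    have h1 : P3.s 0 ≤ P3.x 1 := Or.inr (Or.inr (Or.inl (by omega)))
    have h2 : P3.s 0 ≤ P3.x 0 := Or.inr (Or.inl (by omega))
    have h3 : P3.s 0 ≤ P3.t 0 := Or.inr (Or.inl (by omega))
    have h4 : P3.x 1 ≤ P3.x 0 := Or.inr ⟨by omega, Or.inr (by omega)⟩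
    have h5 : P3.x 1 ≤ P3.t 0 := Or.inr (Or.inr (Or.inl (by omega)))
    have h6 : P3.x 0 ≤ P3.t 0 := Or.inr (Or.inl (by omega))
    intro a ha b hb hne
    simp only [Finset.coe_insert, Set.mem_insert_iff, Finset.coe_singleton,
      Set.mem_singleton_iff] at ha hb
    rcases ha with rfl | rfl | rfl | rfl <;> rcases hb with rfl | rfl | rfl | rfl <;>
      first
        | exact absurd rfl hne
        | exact Or.inl ‹_›
        | exact Or.inr ‹_›
        | exact Or.inl (by assumption)
        | exact Or.inr (by assumption)
  have hcard : ({P3.s 0, P3.x 1, P3.x 0, P3.t 0} : Finset P3).card = 4 := by decide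
  have := h _ hchain
  omega

noncomputable def SL : Sublattice (Co P3) :=
  ⟨latticeClosure {Ac, Bc, Cc}, isSublattice_latticeClosure.1, isSublattice_latticeClosure.2⟩

end Stmt5aux

namespace Stmt5aux

lemma SL_infinite : Infinite (↥SL) := closure_infinite.to_subtype

noncomputable def gFun : Fin 3 → ↥SL := ![⟨Ac, Ac_mem⟩, ⟨Bc, Bc_mem⟩, ⟨Cc, Cc_mem⟩]

lemma g_closure : latticeClosure (Set.range gFun) = Set.univ := by
  apply Set.eq_univ_of_forall
  intro z
  have hsub : latticeClosure {Ac, Bc, Cc} ⊆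
      Subtype.val '' latticeClosure (Set.range gFun) := by
    apply latticeClosure_min
    · rintro w hw
      simp only [Set.mem_insert_iff, Set.mem_singleton_iff] at hw
      rcases hw with rfl | rfl | rfl
      · exact ⟨gFun 0, subset_latticeClosure (Set.mem_range_self 0), rfl⟩
      · exact ⟨gFun 1, subset_latticeClosure (Set.mem_range_self 1), rfl⟩
      · exact ⟨gFun 2, subset_latticeClosure (Set.mem_range_self 2), rfl⟩
    · constructor
      · rintro _ ⟨a, ha, rfl⟩ _ ⟨b, hb, rfl⟩
        exact ⟨a ⊔ b, isSublattice_latticeClosure.1 ha hb, rfl⟩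
      · rintro _ ⟨a, ha, rfl⟩ _ ⟨b, hb, rfl⟩
        exact ⟨a ⊓ b, isSublattice_latticeClosure.2 ha hb, rfl⟩
  obtain ⟨w, hw, hwz⟩ := hsub z.2
  have hwz' : w = z := Subtype.ext hwz
  exact hwz' ▸ hw

noncomputable def fHom : LatticeHom (↥SL) (Co P3) where
  toFun := Subtype.val
  map_sup' := fun _ _ => rfl
  map_inf' := fun _ _ => rfl

lemma fHom_inj : Function.Injective fHom := Subtype.val_injective

lemma lengthn {n : ℕ} (hn : 3 ≤ n) : lengthLE P3 n := fun C hC =>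
  le_trans (length3 C hC) (by omega)

end Stmt5aux


theorem stmt5 :
    (∃ (P : Type) (_ : PartialOrder P), lengthLE P 3 ∧ ¬ lengthLE P 2 ∧
      ∃ A B C : Co P, (latticeClosure {A, B, C}).Infinite) ∧
    (∀ n : ℕ, 3 ≤ n →
      ∃ (L : Type) (_ : Lattice L), Infinite L ∧
        (∃ g : Fin 3 → L, latticeClosure (Set.range g) = Set.univ) ∧
        ∃ (Q : Type) (_ : PartialOrder Q), lengthLE Q n ∧
          ∃ f : LatticeHom L (Co Q), Function.Injective f) := by
  constructor
  · exact ⟨Stmt5aux.P3, inferInstance, Stmt5aux.length3, Stmt5aux.not_length2,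
      Stmt5aux.Ac, Stmt5aux.Bc, Stmt5aux.Cc, Stmt5aux.closure_infinite⟩
  · intro n hn
    exact ⟨↥Stmt5aux.SL, inferInstance, Stmt5aux.SL_infinite,
      ⟨Stmt5aux.gFun, Stmt5aux.g_closure⟩, Stmt5aux.P3, inferInstance,
      Stmt5aux.lengthn hn, Stmt5aux.fHom, Stmt5aux.fHom_inj⟩
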